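/- The first positive zero of the derivative of the Bessel function J_{3/2} coincides with the first positive root of S(z) = −cot z − (2/3)z + 1/z, and satisfies j'_{3/2,1} < 5π/6 < 2√2. -/

import Mathlib

open Real

noncomputable def besselJ (ν x : ℝ) : ℝ :=
  ∑' n : ℕ, ((-1)^n / (n.factorial * Real.Gamma (ν + n + 1))) *
    (x / 2) ^ (2 * n) * (x / 2) ^ ν

noncomputable def besselJPrimeFirstZero (ν : ℝ) : ℝ :=
  sInf {x : ℝ | 0 < x ∧ deriv (besselJ ν) x = 0}

noncomputable def Sfun (z : ℝ) : ℝ := -Real.cot z - 2 * z / 3 + 1 / z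

lemma gamma_n52 (n : ℕ) : Real.Gamma ((n:ℝ) + 5/2) =
    Real.sqrt π * (2*n+4).factorial / (4^(n+2) * (n+2).factorial) := by
  induction n with
  | zero =>
    have h1 : ((0:ℕ):ℝ) + 5/2 = (3/2 : ℝ) + 1 := by norm_num
    have h2 : (3/2 : ℝ) = (1/2 : ℝ) + 1 := by norm_num
    rw [h1, Real.Gamma_add_one (by norm_num), h2, Real.Gamma_add_one (by norm_num),
      Real.Gamma_one_half_eq]
    norm_num [Nat.factorial]
    ring
  | succ n ih =>
    have h1 : ((n+1:ℕ):ℝ) + 5/2 = ((n:ℝ) + 5/2) + 1 := by push_cast; ring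
    rw [h1, Real.Gamma_add_one (by positivity), ih]
    have h2 : (2*(n+1)+4).factorial = (2*n+6) * ((2*n+5) * (2*n+4).factorial) := by
      have e1 : 2*(n+1)+4 = (2*n+5)+1 := by ring
      have e2 : 2*n+5 = (2*n+4)+1 := by ring
      rw [e1, Nat.factorial_succ, e2, Nat.factorial_succ]
    have h3 : ((n+1)+2).factorial = (n+3) * (n+2).factorial := by
      have : (n+1)+2 = (n+2)+1 := by ring
      rw [this, Nat.factorial_succ]
    rw [h2, h3]
    have h4 : ((n+2).factorial : ℝ) ≠ 0 := by positivity
    push_cast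
    field_simp
    ring

lemma two_rpow_32 : (2:ℝ) ^ ((3:ℝ)/2) = 2 * Real.sqrt 2 := by
  have : ((3:ℝ)/2) = (1:ℝ) + (1/2 : ℝ) := by norm_num
  rw [this, Real.rpow_add (by norm_num), Real.rpow_one, ← Real.sqrt_eq_rpow]

lemma term_eq (x : ℝ) (hx : 0 < x) (n : ℕ) :
    ((-1:ℝ)^n / ((n.factorial : ℝ) * Real.Gamma (3/2 + n + 1))) * (x/2)^(2*n) * (x/2) ^ ((3:ℝ)/2) =
    (Real.sqrt (2/π) * x ^ (-(3:ℝ)/2)) *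
      ((-1:ℝ)^(n+1) * x^(2*(n+1)+1)/((2*(n+1)+1).factorial : ℝ)
        - x * ((-1:ℝ)^(n+1) * x^(2*(n+1))/((2*(n+1)).factorial : ℝ))) := by
  have hg : Real.Gamma (3/2 + (n:ℝ) + 1)
      = Real.sqrt π * (2*n+4).factorial / (4^(n+2) * (n+2).factorial) := by
    rw [show (3/2 + (n:ℝ) + 1) = (n:ℝ) + 5/2 by ring, gamma_n52]
  have hsp : (0:ℝ) < Real.sqrt π := Real.sqrt_pos.mpr Real.pi_pos
  have hsp2 : Real.sqrt π ^ 2 = π := Real.sq_sqrt Real.pi_pos.le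
  have hs2 : (0:ℝ) < Real.sqrt 2 := by positivity
  have hs22 : Real.sqrt 2 ^ 2 = 2 := Real.sq_sqrt (by norm_num)
  have hsq : Real.sqrt (2/π) = Real.sqrt 2 / Real.sqrt π := Real.sqrt_div (by norm_num) π
  have h1 : ((x/2):ℝ) ^ ((3:ℝ)/2) = x ^ ((3:ℝ)/2) / (2 * Real.sqrt 2) := by
    rw [Real.div_rpow hx.le (by norm_num), two_rpow_32]
  have h2 : (x/2)^(2*n) = x^(2*n) / 2^(2*n) := div_pow x 2 (2*n)
  have h3 : x^(2*(n+1)+1) = x^(2*n) * x^3 := by ring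
  have h4 : x^(2*(n+1)) = x^(2*n) * x^2 := by ring
  have h5 : x ^ (-(3:ℝ)/2) * x^3 = x ^ ((3:ℝ)/2) := by
    rw [← Real.rpow_natCast x 3, ← Real.rpow_add hx]
    norm_num
  have hx3 : x^3 ≠ 0 := by positivity
  have key : x ^ (-(3:ℝ)/2) = x ^ ((3:ℝ)/2) / x^3 := by
    rw [eq_div_iff hx3]
    exact h5
  have hf1 : ((2*(n+1)+1).factorial : ℝ) = (2*n+3) * ((2*n+2) * (2*n+1).factorial) := by
    rw [show 2*(n+1)+1 = (2*n+2)+1 by ring, Nat.factorial_succ,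
      show 2*n+2 = (2*n+1)+1 by ring, Nat.factorial_succ]
    push_cast; ring
  have hf2 : ((2*(n+1)).factorial : ℝ) = (2*n+2) * (2*n+1).factorial := by
    rw [show 2*(n+1) = (2*n+1)+1 by ring, Nat.factorial_succ]
    push_cast; ring
  have hf3 : ((2*n+4).factorial : ℝ)
      = (2*n+4) * ((2*n+3) * ((2*n+2) * (2*n+1).factorial)) := by
    rw [show 2*n+4 = (2*n+3)+1 by ring, Nat.factorial_succ,
      show 2*n+3 = (2*n+2)+1 by ring, Nat.factorial_succ,
      show 2*n+2 = (2*n+1)+1 by ring, Nat.factorial_succ]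
    push_cast; ring
  have hf4 : ((n+2).factorial : ℝ) = (n+2) * ((n+1) * n.factorial) := by
    rw [show n+2 = (n+1)+1 by ring, Nat.factorial_succ, Nat.factorial_succ]
    push_cast; ring
  have h42 : ((4:ℝ))^(n+2) = 2^(2*n) * 16 := by
    rw [show ((4:ℝ)) = 2^2 by norm_num, ← pow_mul]
    ring
  have hnf : ((n.factorial : ℝ)) ≠ 0 := by positivity
  have h21f : (((2*n+1).factorial : ℝ)) ≠ 0 := by positivity
  have hxp : (0:ℝ) < x ^ ((3:ℝ)/2) := Real.rpow_pos_of_pos hx _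
  have hp2 : ((2:ℝ))^(2*n) ≠ 0 := by positivity
  set K : ℝ := Real.sqrt 2 / Real.sqrt π *
      ((-1:ℝ)^n * (2*(n:ℝ)+2) / ((2*(n:ℝ)+3) * ((2*(n:ℝ)+2) * (2*n+1).factorial)))
    with hK
  have hL : ((-1:ℝ)^n / ((n.factorial : ℝ) * Real.Gamma (3/2 + n + 1))) * (x/2)^(2*n) * (x/2) ^ ((3:ℝ)/2)
      = K * x^(2*n) * x ^ ((3:ℝ)/2) := by
    rw [hg, h1, h2, hf3, hf4, h42, hK]
    field_simp
    ring_nf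
    rw [hs22]
    ring
  have hR : (Real.sqrt (2/π) * x ^ (-(3:ℝ)/2)) *
      ((-1:ℝ)^(n+1) * x^(2*(n+1)+1)/((2*(n+1)+1).factorial : ℝ)
        - x * ((-1:ℝ)^(n+1) * x^(2*(n+1))/((2*(n+1)).factorial : ℝ)))
      = K * x^(2*n) * x ^ ((3:ℝ)/2) := by
    rw [hsq, key, h3, h4, hf1, hf2, hK]
    field_simp
    ring
  rw [hL, hR]

lemma besselJ_closed {x : ℝ} (hx : 0 < x) :
    besselJ (3/2) x = Real.sqrt (2/π) * x ^ (-(3:ℝ)/2) * (Real.sin x - x * Real.cos x) := by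
  have hb : HasSum (fun n : ℕ => (-1:ℝ)^n * x^(2*n+1)/((2*n+1).factorial : ℝ)
      - x * ((-1:ℝ)^n * x^(2*n)/((2*n).factorial : ℝ))) (Real.sin x - x * Real.cos x) := by
    have h1 := Real.hasSum_sin x
    have h2 := (Real.hasSum_cos x).mul_left x
    simpa [mul_div_assoc] using h1.sub h2
  have hb0 : ((-1:ℝ)^0 * x^(2*0+1)/((2*0+1).factorial : ℝ)
      - x * ((-1:ℝ)^0 * x^(2*0)/((2*0).factorial : ℝ))) = 0 := by
    norm_num
  have hb1 : HasSum (fun n : ℕ => (-1:ℝ)^(n+1) * x^(2*(n+1)+1)/((2*(n+1)+1).factorial : ℝ)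
      - x * ((-1:ℝ)^(n+1) * x^(2*(n+1))/((2*(n+1)).factorial : ℝ))) (Real.sin x - x * Real.cos x) := by
    have h := (hasSum_nat_add_iff' (f := fun n : ℕ => (-1:ℝ)^n * x^(2*n+1)/((2*n+1).factorial : ℝ)
      - x * ((-1:ℝ)^n * x^(2*n)/((2*n).factorial : ℝ))) 1).mpr hb
    simpa [hb0] using h
  have hb2 := hb1.mul_left (Real.sqrt (2/π) * x ^ (-(3:ℝ)/2))
  have hsum : HasSum (fun n : ℕ => ((-1:ℝ)^n / ((n.factorial : ℝ) * Real.Gamma (3/2 + n + 1))) * (x/2)^(2*n) * (x/2) ^ ((3:ℝ)/2))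
      (Real.sqrt (2/π) * x ^ (-(3:ℝ)/2) * (Real.sin x - x * Real.cos x)) := by
    rw [funext (term_eq x hx)]
    exact hb2
  rw [besselJ]
  exact_mod_cast hsum.tsum_eq

lemma deriv_besselJ {x : ℝ} (hx : 0 < x) :
    deriv (besselJ (3/2)) x = Real.sqrt (2/π) * x ^ (-(5:ℝ)/2) *
      (x^2 * Real.sin x - (3/2) * (Real.sin x - x * Real.cos x)) := by
  have hev : besselJ (3/2) =ᶠ[nhds x]
      (fun y => Real.sqrt (2/π) * y ^ (-(3:ℝ)/2) * (Real.sin y - y * Real.cos y)) := by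
    filter_upwards [isOpen_Ioi.mem_nhds (Set.mem_Ioi.mpr hx)] with y hy
    exact besselJ_closed hy
  rw [hev.deriv_eq]
  have h1 : HasDerivAt (fun y : ℝ => y ^ (-(3:ℝ)/2))
      ((-(3:ℝ)/2) * x ^ (-(3:ℝ)/2 - 1)) x :=
    Real.hasDerivAt_rpow_const (Or.inl hx.ne')
  have h2 : HasDerivAt (fun y : ℝ => Real.sin y - y * Real.cos y)
      (Real.cos x - (1 * Real.cos x + x * (-Real.sin x))) x :=
    (Real.hasDerivAt_sin x).sub ((hasDerivAt_id x).mul (Real.hasDerivAt_cos x))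
  have h3 := ((h1.mul h2).const_mul (Real.sqrt (2/π)))
  have h4 : HasDerivAt (fun y => Real.sqrt (2/π) * y ^ (-(3:ℝ)/2) * (Real.sin y - y * Real.cos y))
      (Real.sqrt (2/π) * ((-(3:ℝ)/2) * x ^ (-(3:ℝ)/2 - 1) * (Real.sin x - x * Real.cos x)
        + x ^ (-(3:ℝ)/2) * (Real.cos x - (1 * Real.cos x + x * (-Real.sin x))))) x := by
    exact h3.congr_of_eventuallyEq (Filter.Eventually.of_forall fun y => by
      simp only [Pi.mul_apply]
      ring)
  rw [h4.deriv]
  have e1 : x ^ (-(3:ℝ)/2 - 1) = x ^ (-(5:ℝ)/2) := by norm_num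
  have e2 : x ^ (-(3:ℝ)/2) = x * x ^ (-(5:ℝ)/2) := by
    rw [show (-(3:ℝ)/2) = 1 + (-(5:ℝ)/2) by norm_num, Real.rpow_add hx, Real.rpow_one]
  rw [e1, e2]
  ring

lemma deriv_zero_iff {x : ℝ} (hx : 0 < x) :
    deriv (besselJ (3/2)) x = 0 ↔
      x^2 * Real.sin x - 3/2 * (Real.sin x - x * Real.cos x) = 0 := by
  rw [deriv_besselJ hx]
  have hc : Real.sqrt (2/π) ≠ 0 := by
    have : (0:ℝ) < 2/π := by positivity
    exact (Real.sqrt_pos.mpr this).ne'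
  have hp : x ^ (-(5:ℝ)/2) ≠ 0 := (Real.rpow_pos_of_pos hx _).ne'
  rw [mul_eq_zero]
  exact or_iff_right (mul_ne_zero hc hp)

lemma Sfun_zero_iff {x : ℝ} (hx : 0 < x) :
    Sfun x = 0 ↔ x^2 * Real.sin x - 3/2 * (Real.sin x - x * Real.cos x) = 0 := by
  have hx0 : x ≠ 0 := hx.ne'
  by_cases hs : Real.sin x = 0
  · refine iff_of_false ?_ ?_
    · obtain ⟨n, hn⟩ := Real.sin_eq_zero_iff.mp hs
      have hn1 : (1:ℤ) ≤ n := by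
        by_contra h
        push_neg at h
        have : (n:ℝ) ≤ 0 := by exact_mod_cast Int.lt_add_one_iff.mp (by exact_mod_cast h)
        nlinarith [Real.pi_pos]
      have hxpi : π ≤ x := by
        rw [← hn]
        nlinarith [Real.pi_pos, (by exact_mod_cast hn1 : (1:ℝ) ≤ (n:ℝ))]
      rw [Sfun, Real.cot_eq_cos_div_sin, hs, div_zero]
      have h1 : 1/x ≤ 1/π := by
        apply one_div_le_one_div_of_le Real.pi_pos hxpi
      have h2 : 1/π < 1 := by
        rw [div_lt_one Real.pi_pos]
        linarith [Real.pi_gt_three]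
      intro h
      linarith [Real.pi_gt_three]
    · have hc : Real.cos x ≠ 0 := by
        intro hc
        nlinarith [Real.sin_sq_add_cos_sq x]
      simp only [hs]
      intro h
      apply hc
      nlinarith [h]
  · rw [Sfun, Real.cot_eq_cos_div_sin]
    constructor
    · intro h
      field_simp at h
      nlinarith [h]
    · intro h
      field_simp
      nlinarith [h]

lemma exists_root : ∃ c : ℝ, 0 < c ∧ c < 5*π/6 ∧
    c^2 * Real.sin c - 3/2 * (Real.sin c - c * Real.cos c) = 0 := by
  set F : ℝ → ℝ := fun x => x^2 * Real.sin x - 3/2 * (Real.sin x - x * Real.cos x) with hF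
  have hcont : ContinuousOn F (Set.Icc (π/2) (5*π/6)) := by
    apply Continuous.continuousOn
    fun_prop
  have hab : π/2 ≤ 5*π/6 := by linarith [Real.pi_pos]
  have hFa : 0 < F (π/2) := by
    simp only [hF, Real.sin_pi_div_two, Real.cos_pi_div_two]
    nlinarith [Real.pi_gt_three]
  have hFb : F (5*π/6) < 0 := by
    have e1 : (5*π/6 : ℝ) = π - π/6 := by ring
    simp only [hF]
    rw [e1, Real.sin_pi_sub, Real.cos_pi_sub, Real.sin_pi_div_six, Real.cos_pi_div_six]
    have h3 : (1.732:ℝ) < Real.sqrt 3 := by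
      rw [show (1.732:ℝ) = Real.sqrt (1.732^2) by rw [Real.sqrt_sq]; norm_num]
      apply Real.sqrt_lt_sqrt (by norm_num)
      norm_num
    nlinarith [Real.pi_gt_d6, Real.pi_lt_d2, Real.pi_pos]
  have hmem : (0:ℝ) ∈ Set.Icc (F (5*π/6)) (F (π/2)) := ⟨hFb.le, hFa.le⟩
  obtain ⟨c, hc, hFc⟩ := intermediate_value_Icc' hab hcont hmem
  refine ⟨c, ?_, ?_, hFc⟩
  · have := hc.1
    linarith [Real.pi_pos]
  · rcases lt_or_eq_of_le hc.2 with h | h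
    · exact h
    · exfalso
      rw [h] at hFc
      rw [hFc] at hFb
      exact lt_irrefl 0 hFb

theorem besselJPrime_three_halves_first_zero :
    besselJPrimeFirstZero (3/2) = sInf {x : ℝ | 0 < x ∧ Sfun x = 0} ∧
      besselJPrimeFirstZero (3/2) < 5 * π / 6 ∧ 5 * π / 6 < 2 * Real.sqrt 2 := by
  have hset : {x : ℝ | 0 < x ∧ deriv (besselJ (3/2)) x = 0}
      = {x : ℝ | 0 < x ∧ Sfun x = 0} := by
    ext x
    simp only [Set.mem_setOf_eq]
    constructor
    · rintro ⟨hx, h⟩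
      exact ⟨hx, (Sfun_zero_iff hx).mpr ((deriv_zero_iff hx).mp h)⟩
    · rintro ⟨hx, h⟩
      exact ⟨hx, (deriv_zero_iff hx).mpr ((Sfun_zero_iff hx).mp h)⟩
  refine ⟨by rw [besselJPrimeFirstZero, hset], ?_, ?_⟩
  · obtain ⟨c, hc0, hclt, hcF⟩ := exists_root
    have hcmem : c ∈ {x : ℝ | 0 < x ∧ deriv (besselJ ((3:ℝ)/2)) x = 0} :=
      ⟨hc0, (deriv_zero_iff hc0).mpr hcF⟩
    have hbdd : BddBelow {x : ℝ | 0 < x ∧ deriv (besselJ ((3:ℝ)/2)) x = 0} :=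
      ⟨0, fun y hy => hy.1.le⟩
    calc besselJPrimeFirstZero (3/2) ≤ c := csInf_le hbdd hcmem
      _ < 5 * π / 6 := by linarith
  · have h2 : (1.4142:ℝ) < Real.sqrt 2 := by
      rw [show (1.4142:ℝ) = Real.sqrt (1.4142^2) by rw [Real.sqrt_sq]; norm_num]
      apply Real.sqrt_lt_sqrt (by norm_num)
      norm_num
    nlinarith [Real.pi_lt_d2]
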